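/- A finite distributive lattice D is an absolute retract for the class of all finite distributive lattices (with all lattice homomorphisms) if and only if D is a boolean lattice. -/

import Mathlib

open Finset

section Aux

variable {D K : Type} [DistribLattice D] [DistribLattice K]

lemma aux_le_iff (ι : LatticeHom D K) (hι : Function.Injective ι) {d d' : D} :
    ι d ≤ ι d' ↔ d ≤ d' := by
  constructor
  · intro h
    have h1 : ι (d ⊓ d') = ι d := by rw [map_inf]; exact inf_eq_left.mpr h
    exact inf_eq_left.mp (hι h1)
  · intro h
    exact OrderHomClass.mono ι h

/-- Extension of a join-prime element along an injective lattice hom into a finite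
distributive lattice. -/
lemma exists_joinPrime [Fintype K] (ι : LatticeHom D K) (hι : Function.Injective ι)
    (p : D) (hp : ∀ d₁ d₂ : D, p ≤ d₁ ⊔ d₂ → p ≤ d₁ ∨ p ≤ d₂) :
    ∃ q : K, (∀ d, q ≤ ι d ↔ p ≤ d) ∧ ∀ k₁ k₂ : K, q ≤ k₁ ⊔ k₂ → q ≤ k₁ ∨ q ≤ k₂ := by
  classical
  set T : Finset K := univ.filter (fun k => k ≤ ι p ∧ ∀ d, k ≤ ι d → p ≤ d) with hT
  have hmem : ∀ k, k ∈ T ↔ (k ≤ ι p ∧ ∀ d, k ≤ ι d → p ≤ d) := by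
    intro k; simp [hT]
  have hne : T.Nonempty :=
    ⟨ι p, (hmem _).mpr ⟨le_rfl, fun d h => (aux_le_iff ι hι).mp h⟩⟩
  obtain ⟨q, hqT, hqmin⟩ := T.exists_minimal hne
  rw [hmem] at hqT
  refine ⟨q, fun d => ⟨hqT.2 d, fun h => hqT.1.trans (OrderHomClass.mono ι h)⟩, ?_⟩
  intro k₁ k₂ h
  by_contra hcon
  push_neg at hcon
  obtain ⟨h1, h2⟩ := hcon
  have hlt1 : q ⊓ k₁ < q := lt_of_le_of_ne inf_le_left (fun e => h1 (inf_eq_left.mp e))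
  have hlt2 : q ⊓ k₂ < q := lt_of_le_of_ne inf_le_left (fun e => h2 (inf_eq_left.mp e))
  have hn1 : q ⊓ k₁ ∉ T := fun hm => lt_irrefl _ (lt_of_lt_of_le hlt1 (hqmin hm hlt1.le))
  have hn2 : q ⊓ k₂ ∉ T := fun hm => lt_irrefl _ (lt_of_lt_of_le hlt2 (hqmin hm hlt2.le))
  rw [hmem] at hn1 hn2
  push_neg at hn1 hn2
  obtain ⟨d₁, hd₁, hpd₁⟩ := hn1 (inf_le_left.trans hqT.1)
  obtain ⟨d₂, hd₂, hpd₂⟩ := hn2 (inf_le_left.trans hqT.1)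
  have hq : q = (q ⊓ k₁) ⊔ (q ⊓ k₂) := by
    rw [← inf_sup_left]; exact (inf_eq_left.mpr h).symm
  have : q ≤ ι (d₁ ⊔ d₂) := by
    rw [map_sup]
    calc q = (q ⊓ k₁) ⊔ (q ⊓ k₂) := hq
    _ ≤ ι d₁ ⊔ ι d₂ := sup_le_sup hd₁ hd₂
  rcases hp d₁ d₂ (hqT.2 _ this) with hh | hh
  · exact hpd₁ hh
  · exact hpd₂ hh

lemma atom_prime [OrderBot D] {a : D} (ha : IsAtom a) {d₁ d₂ : D} (h : a ≤ d₁ ⊔ d₂) :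
    a ≤ d₁ ∨ a ≤ d₂ := by
  have hsplit : a = (a ⊓ d₁) ⊔ (a ⊓ d₂) := by
    rw [← inf_sup_left]; exact (inf_eq_left.mpr h).symm
  rcases ha.le_iff.mp (inf_le_left : a ⊓ d₁ ≤ a) with h1 | h1
  · rcases ha.le_iff.mp (inf_le_left : a ⊓ d₂ ≤ a) with h2 | h2
    · exact absurd (by rw [hsplit, h1, h2, sup_idem]) ha.1
    · exact Or.inr (inf_eq_left.mp h2)
  · exact Or.inl (inf_eq_left.mp h1)

lemma sup_atoms_eq [Fintype D] [BoundedOrder D] [ComplementedLattice D] (d : D)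
    (s : Finset D) (hs : ∀ a, a ∈ s ↔ IsAtom a ∧ a ≤ d) : s.sup id = d := by
  classical
  set e := s.sup id with he
  have hed : e ≤ d := Finset.sup_le (fun a ha => ((hs a).mp ha).2)
  obtain ⟨c, hc⟩ := exists_isCompl e
  rcases eq_bot_or_exists_atom_le (d ⊓ c) with h0 | ⟨a, ha, hale⟩
  · have : d = e := by
      calc d = d ⊓ (e ⊔ c) := by rw [hc.sup_eq_top, inf_top_eq]
      _ = (d ⊓ e) ⊔ (d ⊓ c) := inf_sup_left d e c
      _ = e := by rw [inf_eq_right.mpr hed, h0, sup_bot_eq]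
    exact this.symm
  · exfalso
    have h1 : a ≤ e := Finset.le_sup (f := (id : D → D)) ((hs a).mpr ⟨ha, hale.trans inf_le_left⟩)
    have h2 : a ≤ e ⊓ c := le_inf h1 (hale.trans inf_le_right)
    rw [hc.inf_eq_bot] at h2
    exact ha.1 (le_bot_iff.mp h2)

end Aux

/-- A finite distributive lattice `D` is an absolute retract for the
class of all finite distributive lattices (with all lattice homomorphisms) if and
only if `D` is a boolean lattice (i.e., a finite complemented distributive
lattice). -/
theorem statement17 (D : Type) [DistribLattice D] [Fintype D] [BoundedOrder D] :
    (∀ (K : Type) [DistribLattice K] [Fintype K],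
      ∀ ι : LatticeHom D K, Function.Injective ι →
        ∃ f : LatticeHom K D, ∀ d : D, f (ι d) = d) ↔
    ComplementedLattice D := by
  classical
  constructor
  · -- absolute retract → complemented
    intro h
    obtain ⟨f, hf⟩ := h (Finset {a : D // SupIrred a}) LatticeHom.birkhoffFinset
      LatticeHom.birkhoffFinset_injective
    set ι := (LatticeHom.birkhoffFinset (α := D)) with hι
    have hmono : Monotone f := OrderHomClass.mono f
    have htop : f ⊤ = ⊤ := le_antisymm le_top (by rw [← hf ⊤]; exact hmono le_top)
    have hbot : f ⊥ = ⊥ := le_antisymm (by rw [← hf ⊥]; exact hmono bot_le) bot_le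
    refine ⟨fun d => ⟨f (ι d)ᶜ, IsCompl.of_eq ?_ ?_⟩⟩
    · have h1 := congrArg f (inf_compl_eq_bot : ι d ⊓ (ι d)ᶜ = ⊥)
      rw [map_inf, hf, hbot] at h1
      exact h1
    · have h2 := congrArg f (sup_compl_eq_top : ι d ⊔ (ι d)ᶜ = ⊤)
      rw [map_sup, hf, htop] at h2
      exact h2
  · -- complemented → absolute retract
    intro hC K _ _ ι hι
    have hex : ∀ a : D, ∃ q : K, IsAtom a →
        (∀ d, q ≤ ι d ↔ a ≤ d) ∧ ∀ k₁ k₂ : K, q ≤ k₁ ⊔ k₂ → q ≤ k₁ ∨ q ≤ k₂ := by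
      intro a
      by_cases ha : IsAtom a
      · obtain ⟨qa, h1, h2⟩ := exists_joinPrime ι hι a (fun _ _ hd => atom_prime ha hd)
        exact ⟨qa, fun _ => ⟨h1, h2⟩⟩
      · exact ⟨ι ⊥, fun h => absurd h ha⟩
    choose q hq using hex
    have hq1 : ∀ a : D, IsAtom a → ∀ d, q a ≤ ι d ↔ a ≤ d := fun a ha => (hq a ha).1
    have hq2 : ∀ a : D, IsAtom a → ∀ k₁ k₂ : K, q a ≤ k₁ ⊔ k₂ → q a ≤ k₁ ∨ q a ≤ k₂ :=
      fun a ha => (hq a ha).2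
    set F : K → Finset D := fun k => univ.filter fun a => IsAtom a ∧ q a ≤ k with hF
    have hmemF : ∀ k a, a ∈ F k ↔ IsAtom a ∧ q a ≤ k := by
      intro k a; simp [hF]
    refine ⟨⟨⟨fun k => (F k).sup id, ?_⟩, ?_⟩, ?_⟩
    · -- preserves sup
      intro k₁ k₂
      apply le_antisymm
      · refine Finset.sup_le fun a ha => ?_
        rw [hmemF] at ha
        rcases hq2 a ha.1 k₁ k₂ ha.2 with hh | hh
        · exact le_sup_of_le_left (Finset.le_sup ((hmemF _ _).mpr ⟨ha.1, hh⟩))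
        · exact le_sup_of_le_right (Finset.le_sup ((hmemF _ _).mpr ⟨ha.1, hh⟩))
      · refine sup_le ?_ ?_
        · refine Finset.sup_le fun a ha => ?_
          rw [hmemF] at ha
          exact Finset.le_sup ((hmemF _ _).mpr ⟨ha.1, ha.2.trans le_sup_left⟩)
        · refine Finset.sup_le fun a ha => ?_
          rw [hmemF] at ha
          exact Finset.le_sup ((hmemF _ _).mpr ⟨ha.1, ha.2.trans le_sup_right⟩)
    · -- preserves inf
      intro k₁ k₂
      apply le_antisymm
      · refine Finset.sup_le fun a ha => ?_
        rw [hmemF] at ha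
        exact le_inf (Finset.le_sup ((hmemF _ _).mpr ⟨ha.1, ha.2.trans inf_le_left⟩))
          (Finset.le_sup ((hmemF _ _).mpr ⟨ha.1, ha.2.trans inf_le_right⟩))
      · rw [Finset.sup_inf_distrib_right]
        refine Finset.sup_le fun a ha => ?_
        rw [Finset.sup_inf_distrib_left]
        refine Finset.sup_le fun b hb => ?_
        rw [hmemF] at ha hb
        by_cases hab : a = b
        · subst hab
          simp only [id_eq, inf_idem]
          exact Finset.le_sup (f := (id : D → D)) ((hmemF _ _).mpr ⟨ha.1, le_inf ha.2 hb.2⟩)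
        · have hbb : a ⊓ b = ⊥ := by
            rcases ha.1.le_iff.mp (inf_le_left : a ⊓ b ≤ a) with hh | hh
            · exact hh
            · exfalso
              have hba : a ≤ b := hh ▸ inf_le_right
              rcases hb.1.le_iff.mp hba with h' | h'
              · exact ha.1.1 h'
              · exact hab h'
          simp only [id_eq]
          rw [hbb]
          exact bot_le
    · -- retraction
      intro d
      show (F (ι d)).sup id = d
      refine sup_atoms_eq d _ fun a => ?_
      rw [hmemF]
      exact and_congr_right fun ha => hq1 a ha d
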